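/- arXiv:1808.09695 — 2 statements merged into one kernel-verified Lean document; each statement's English description precedes it below -/
import Mathlib

section
/- Let G be an abelian group, E a closed set in an open domain U ⊂ ℝⁿ, and B' a convex set with cl(B') ⊂ U. If {F_j} is a sequence of d-dimensional G-topological competitors of E in B' and F_j converges to a closed set F in Hausdorff distance, then for every convex set B with cl(B') ⊂ B ⊂ cl(B) ⊂ U, the set F is a G-topological competitor of dimension d of E in B. -/
open Set MeasureTheory Metric Filter CategoryTheory MonoidalCategory
open scoped NNReal ENNReal

noncomputable section

/-- `Euc n` is the Euclidean space `ℝⁿ`. -/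
abbrev Euc (n : ℕ) := EuclideanSpace ℝ (Fin n)

/-- `f` is (the time-1 map of) a deformation in `U`: there is a one-parameter family `φ t`
of continuous self-maps of `U` starting from the identity, depending continuously on `(t,x)`,
whose time-1 map is Lipschitz, and which moves points only inside a relatively
compact subset of `U`; `f` agrees with the time-1 map on `U`. -/
def IsDeformationIn {n : ℕ} (U : Set (Euc n)) (f : Euc n → Euc n) : Prop :=
  ∃ φ : ℝ → Euc n → Euc n,
    (∀ t ∈ Icc (0:ℝ) 1, MapsTo (φ t) U U) ∧
    (∀ x ∈ U, φ 0 x = x) ∧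
    ContinuousOn (fun p : ℝ × Euc n => φ p.1 p.2) (Icc (0:ℝ) 1 ×ˢ U) ∧
    (∃ L : ℝ≥0, LipschitzOnWith L (φ 1) U) ∧
    (∃ K : Set (Euc n), IsCompact K ∧ K ⊆ U ∧
      (⋃ t ∈ Icc (0:ℝ) 1, ({x ∈ U | φ t x ≠ x} ∪ φ t '' {x ∈ U | φ t x ≠ x})) ⊆ K) ∧
    EqOn f (φ 1) U

/-- The class `F(E,U)` of deformations of `E` in `U`. -/
def DeformClass {n : ℕ} (E U : Set (Euc n)) : Set (Set (Euc n)) :=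
  {F | ∃ f, IsDeformationIn U f ∧ F = (E \ U) ∪ f '' (E ∩ U)}

/-- Convergence of a sequence of sets to `F` in local Hausdorff distance:
on every compact set `K`, the (one-sided) Hausdorff excesses tend to `0`. -/
def LocHausdorffTendsto {n : ℕ} (E : ℕ → Set (Euc n)) (F : Set (Euc n)) : Prop :=
  ∀ K : Set (Euc n), IsCompact K →
    Tendsto (fun j => (⨆ y ∈ E j ∩ K, EMetric.infEdist y F) ⊔
      ⨆ y ∈ F ∩ K, EMetric.infEdist y (E j)) atTop (nhds 0)

/-- `F` has locally finite `d`-dimensional Hausdorff measure. -/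
def LocallyHFinite {n : ℕ} (d : ℕ) (F : Set (Euc n)) : Prop :=
  ∀ (x : Euc n) (r : ℝ), μH[(d:ℝ)] (F ∩ closedBall x r) < ⊤

/-- The class `F̄(E,U)`: closed subsets of `cl U` with locally finite `H^d` measure, which are
local-Hausdorff limits of sequences of deformations of `E` in `U`, and which carry no
`H^d` measure on `∂U \ E`. -/
def DeformClosure {n : ℕ} (d : ℕ) (E U : Set (Euc n)) : Set (Set (Euc n)) :=
  {F | IsClosed F ∧ F ⊆ closure U ∧
    (∃ Ej : ℕ → Set (Euc n), (∀ j, Ej j ∈ DeformClass E U) ∧ LocHausdorffTendsto Ej F) ∧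
    LocallyHFinite d F ∧ μH[(d:ℝ)] ((F ∩ frontier U) \ E) = 0}

/-- `E` is Almgren minimal of dimension `d` in `U` (for a set `E ⊆ ℝⁿ`, this is minimality
of `E ∩ U`): finite `H^d` measure on compact balls of `U`, and no deformation in `U`
decreases the measure. -/
def AlmgrenMinimalIn {n : ℕ} (d : ℕ) (U E : Set (Euc n)) : Prop :=
  (∀ (x : Euc n) (r : ℝ), closedBall x r ⊆ U → μH[(d:ℝ)] (E ∩ closedBall x r) < ⊤) ∧
  ∀ f, IsDeformationIn U f →
    μH[(d:ℝ)] ((E ∩ U) \ f '' (E ∩ U)) ≤ μH[(d:ℝ)] (f '' (E ∩ U) \ (E ∩ U))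

/-- `E` is reduced (for dimension `d`): it coincides with the closed support of `H^d ⌊ E`. -/
def IsReducedSet {n : ℕ} (d : ℕ) (E : Set (Euc n)) : Prop :=
  E = {x ∈ E | ∀ r > 0, 0 < μH[(d:ℝ)] (E ∩ ball x r)}

/-- The singular chain complex functor with coefficients in the abelian group `G`
(chains are free `ℤ`-modules on singular simplices, tensored with `G`). -/
def singularChainsFunctor (G : Type) [AddCommGroup G] :
    TopCat.{0} ⥤ ChainComplex (ModuleCat.{0} ℤ) ℕ :=
  TopCat.toSSet ⋙
    (SimplicialObject.whiskering _ _).obj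
      (ModuleCat.free ℤ ⋙ tensorRight (ModuleCat.of ℤ G)) ⋙
    AlgebraicTopology.alternatingFaceMapComplex _

/-- The `k`-th singular homology functor with coefficients in `G`. -/
def singularHomologyFunctor (G : Type) [AddCommGroup G] (k : ℕ) :
    TopCat.{0} ⥤ ModuleCat.{0} ℤ :=
  singularChainsFunctor G ⋙ HomologicalComplex.homologyFunctor _ _ k

/-- `S` represents a nonzero element of `H_k(V; G)`: the map induced by the inclusion
`S ⊆ V` on `k`-th singular homology with coefficients in `G` is injective.
(For a `k`-sphere `S`, this says exactly that no nonzero multiple of its fundamental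
class dies in `V`; for `k = 0` it says the two points lie in different components.) -/
def SphereNontrivialIn (G : Type) [AddCommGroup G] (k : ℕ) {X : Type} [TopologicalSpace X]
    (S V : Set X) (h : S ⊆ V) : Prop :=
  Function.Injective
    ((singularHomologyFunctor G k).map
      (TopCat.ofHom ⟨Set.inclusion h, continuous_inclusion h⟩ : TopCat.of S ⟶ TopCat.of V))

/-- `S` is a euclidean `k`-sphere in `ℝⁿ`: a round sphere of positive radius inside a
`(k+1)`-dimensional affine subspace. -/
def IsEuclideanSphere {n : ℕ} (k : ℕ) (S : Set (Euc n)) : Prop :=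
  ∃ (W : AffineSubspace ℝ (Euc n)) (x : Euc n) (r : ℝ), 0 < r ∧ x ∈ W ∧
    Module.finrank ℝ W.direction = k + 1 ∧ S = {y : Euc n | y ∈ W ∧ dist y x = r}

/-- `F` is a `G`-topological competitor of dimension `d` of `E` in the convex set `B`
(inside the open set `U`): `F` is closed, agrees with `E` outside `B`, and every euclidean
`(n-d-1)`-sphere of `U \ (B ∪ E)` representing a nonzero element of `H_{n-d-1}(U \ E; G)`
also represents a nonzero element of `H_{n-d-1}(U \ F; G)`. -/
def TopCompetitorIn (G : Type) [AddCommGroup G] {n : ℕ} (d : ℕ)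
    (U B E F : Set (Euc n)) : Prop :=
  IsClosed F ∧ Convex ℝ B ∧ closure B ⊆ U ∧ F \ B = E \ B ∧
  ∀ S : Set (Euc n), IsEuclideanSphere (n - d - 1) S → S ⊆ U \ (B ∪ E) →
    ∀ (hE : S ⊆ U \ E) (hF : S ⊆ U \ F),
      SphereNontrivialIn G (n - d - 1) S (U \ E) hE →
      SphereNontrivialIn G (n - d - 1) S (U \ F) hF

/-- `F` is a `G`-topological competitor of dimension `d` of `E` in the open set `U`. -/
def TopCompetitor (G : Type) [AddCommGroup G] {n : ℕ} (d : ℕ)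
    (U E F : Set (Euc n)) : Prop :=
  ∃ B, TopCompetitorIn G d U B E F

/-- `E` is `G`-topologically minimal of dimension `d` in `U`. -/
def TopMinimalIn (G : Type) [AddCommGroup G] {n : ℕ} (d : ℕ) (U E : Set (Euc n)) : Prop :=
  (∀ (x : Euc n) (r : ℝ), closedBall x r ⊆ U → μH[(d:ℝ)] (E ∩ closedBall x r) < ⊤) ∧
  ∀ F, TopCompetitor G d U E F → μH[(d:ℝ)] (E \ F) ≤ μH[(d:ℝ)] (F \ E)

/-- `C` is Almgren unique in `U`: it is the only reduced set of `F̄(C,U)` attaining the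
infimum of the `H^d` measure on `F̄(C,U)`. -/
def AlmgrenUniqueIn {n : ℕ} (d : ℕ) (U C : Set (Euc n)) : Prop :=
  ∀ E ∈ DeformClosure d C U, IsReducedSet d E →
    μH[(d:ℝ)] E = (⨅ F ∈ DeformClosure d C U, μH[(d:ℝ)] F) → E = C

/-- `C` is `G`-topologically unique in `U`: it is `G`-topologically minimal in `U`, and every
reduced `G`-topological competitor of `C` in `U` with the same measure in `U` equals `C`. -/
def TopUniqueIn (G : Type) [AddCommGroup G] {n : ℕ} (d : ℕ) (U C : Set (Euc n)) : Prop :=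
  TopMinimalIn G d U C ∧
  ∀ E : Set (Euc n), IsReducedSet d E → TopCompetitor G d U C E →
    μH[(d:ℝ)] (E ∩ U) = μH[(d:ℝ)] (C ∩ U) → E = C

/-- `C` is Almgren unique (in every bounded domain of `ℝⁿ`). -/
def AlmgrenUnique {n : ℕ} (d : ℕ) (C : Set (Euc n)) : Prop :=
  ∀ U : Set (Euc n), IsOpen U → Bornology.IsBounded U → U.Nonempty → AlmgrenUniqueIn d U C

/-- `C` is `G`-topologically unique (in every bounded domain of `ℝⁿ`). -/
def TopUnique (G : Type) [AddCommGroup G] {n : ℕ} (d : ℕ) (C : Set (Euc n)) : Prop :=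
  ∀ U : Set (Euc n), IsOpen U → Bornology.IsBounded U → U.Nonempty → TopUniqueIn G d U C

/-- `C` is a cone (centered at the origin). -/
def IsConeSet {n : ℕ} (C : Set (Euc n)) : Prop :=
  ∀ x ∈ C, ∀ t : ℝ, 0 ≤ t → t • x ∈ C

section SCElt
variable {R : Type} [Ring R]

namespace ShortComplex'
open CategoryTheory.ShortComplex

lemma hcomp {M N P : ModuleCat R} (f : M ⟶ N) (g : N ⟶ P) {x : M} {y : N} (h : f x = y) :
    (f ≫ g) x = g y := by subst h; rfl

/-- package a cycle into homology -/
noncomputable def hmk (S : ShortComplex (ModuleCat R)) (x : S.X₂) (hx : S.g x = 0) :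
    S.homology := S.homologyπ (S.moduleCatCyclesIso.inv ⟨x, hx⟩)

lemma g_tau2 {S T : ShortComplex (ModuleCat R)} (φ : S ⟶ T) (x : S.X₂) (hx : S.g x = 0) :
    T.g (φ.τ₂ x) = 0 := by
  have := hcomp φ.τ₂ T.g (x := x) rfl
  rw [φ.comm₂₃] at this
  rw [← this, hcomp S.g φ.τ₃ hx, map_zero]

lemma hmk_surjective (S : ShortComplex (ModuleCat R)) (h : S.homology) :
    ∃ (x : S.X₂) (hx : S.g x = 0), hmk S x hx = h := by
  obtain ⟨z, hz⟩ := (ModuleCat.epi_iff_surjective S.homologyπ).1 inferInstance h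
  obtain ⟨y, hy⟩ := (ModuleCat.epi_iff_surjective S.moduleCatCyclesIso.inv).1
    inferInstance z
  exact ⟨y.1, y.2, by subst hy; exact hz⟩

lemma hmk_eq_zero_iff (S : ShortComplex (ModuleCat R)) (x : S.X₂) (hx : S.g x = 0) :
    hmk S x hx = 0 ↔ ∃ y, S.f y = x := by
  have h1 : hmk S x hx = S.moduleCatHomologyIso.inv (S.moduleCatLeftHomologyData.π ⟨x, hx⟩) := by
    have h := S.moduleCatCyclesIso_inv_π
    calc hmk S x hx = (S.moduleCatCyclesIso.inv ≫ S.homologyπ) ⟨x, hx⟩ := rfl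
      _ = (S.moduleCatLeftHomologyData.π ≫ S.moduleCatHomologyIso.inv) ⟨x, hx⟩ := by rw [h]
      _ = _ := rfl
  rw [h1]
  constructor
  · intro h0
    have : S.moduleCatLeftHomologyData.π ⟨x, hx⟩ = 0 := by
      apply (ModuleCat.mono_iff_injective S.moduleCatHomologyIso.inv).1 inferInstance
      simpa using h0
    obtain ⟨y, hy⟩ := (Submodule.Quotient.mk_eq_zero _).1 this
    exact ⟨y, congrArg Subtype.val hy⟩
  · rintro ⟨y, rfl⟩
    have : S.moduleCatLeftHomologyData.π ⟨S.f y, hx⟩ = 0 := by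
      apply (Submodule.Quotient.mk_eq_zero _).2
      exact ⟨y, rfl⟩
    rw [this, map_zero]

lemma hmk_naturality {S T : ShortComplex (ModuleCat R)} (φ : S ⟶ T)
    (x : S.X₂) (hx : S.g x = 0) :
    ShortComplex.homologyMap φ (hmk S x hx) = hmk T (φ.τ₂ x) (g_tau2 φ x hx) := by
  have h2 : ShortComplex.cyclesMap φ (S.moduleCatCyclesIso.inv ⟨x, hx⟩) =
      T.moduleCatCyclesIso.inv ⟨φ.τ₂ x, g_tau2 φ x hx⟩ := by
    apply (ModuleCat.mono_iff_injective T.iCycles).1 inferInstance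
    have e1 := hcomp (ShortComplex.cyclesMap φ) T.iCycles
      (x := S.moduleCatCyclesIso.inv ⟨x, hx⟩) rfl
    rw [ShortComplex.cyclesMap_i φ] at e1
    have e2 : (S.moduleCatCyclesIso.inv ≫ S.iCycles) ⟨x, hx⟩ = x := by
      rw [S.moduleCatCyclesIso_inv_iCycles]; rfl
    have e3 : (T.moduleCatCyclesIso.inv ≫ T.iCycles) ⟨φ.τ₂ x, g_tau2 φ x hx⟩ = φ.τ₂ x := by
      rw [T.moduleCatCyclesIso_inv_iCycles]; rfl
    rw [← e1]
    calc (S.iCycles ≫ φ.τ₂) (S.moduleCatCyclesIso.inv ⟨x, hx⟩)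
        = φ.τ₂ ((S.moduleCatCyclesIso.inv ≫ S.iCycles) ⟨x, hx⟩) := rfl
      _ = φ.τ₂ x := by rw [e2]
      _ = T.iCycles (T.moduleCatCyclesIso.inv ⟨φ.τ₂ x, g_tau2 φ x hx⟩) := e3.symm
  calc ShortComplex.homologyMap φ (hmk S x hx)
      = (S.homologyπ ≫ ShortComplex.homologyMap φ) (S.moduleCatCyclesIso.inv ⟨x, hx⟩) := rfl
    _ = (ShortComplex.cyclesMap φ ≫ T.homologyπ) (S.moduleCatCyclesIso.inv ⟨x, hx⟩) := by
        rw [ShortComplex.homologyπ_naturality φ]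
    _ = T.homologyπ (ShortComplex.cyclesMap φ (S.moduleCatCyclesIso.inv ⟨x, hx⟩)) := rfl
    _ = _ := by rw [h2]; rfl

end ShortComplex'
end SCElt
namespace ChainsTK

variable (G : Type) [AddCommGroup G]

abbrev Smp (X : TopCat.{0}) (m : ℕ) : Type :=
  (TopCat.toSSet.obj X).obj (Opposite.op (SimplexCategory.mk m))

abbrev Ch (X : TopCat.{0}) (m : ℕ) : ModuleCat.{0} ℤ :=
  ((singularChainsFunctor G).obj X).X m

abbrev Dl (m : ℕ) : TopCat.{0} := SimplexCategory.toTop.obj (SimplexCategory.mk m)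

def asCont {X : TopCat.{0}} {m : ℕ} (σ : Smp X m) : C((Dl m : Type), (X : Type)) := σ.down.hom

def chE (X : TopCat.{0}) (m : ℕ) : (Ch G X m : Type) ≃ₗ[ℤ] (Smp X m →₀ G) :=
  letI := Classical.decEq (Smp X m)
  TensorProduct.finsuppScalarLeft ℤ G (Smp X m)

lemma chainsMap_tmul {A X : TopCat.{0}} (i : A ⟶ X) (m : ℕ) (p : Smp A m →₀ ℤ) (g : G) :
    (((singularChainsFunctor G).map i).f m) (p ⊗ₜ[ℤ] g : Ch G A m) =
      (Finsupp.mapDomain (fun σ : Smp A m => (TopCat.toSSet.map i).app (Opposite.op (SimplexCategory.mk m)) σ) p ⊗ₜ[ℤ] g : Ch G X m) := by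
  show ((ModuleCat.free ℤ ⋙ tensorRight (ModuleCat.of ℤ G)).map
      ((TopCat.toSSet.map i).app (Opposite.op (SimplexCategory.mk m)))) (p ⊗ₜ[ℤ] g) = _
  rw [Functor.comp_map]
  erw [ModuleCat.MonoidalCategory.whiskerRight_apply]
  rfl

lemma chE_naturality {A X : TopCat.{0}} (i : A ⟶ X) (m : ℕ) (c : Ch G A m) :
    chE G X m (((singularChainsFunctor G).map i).f m c) =
      Finsupp.mapDomain (fun σ : Smp A m => (TopCat.toSSet.map i).app (Opposite.op (SimplexCategory.mk m)) σ) (chE G A m c) := by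
  letI := Classical.decEq (Smp X m)
  letI := Classical.decEq (Smp A m)
  have key : (chE G X m).toLinearMap.comp
        (((singularChainsFunctor G).map i).f m : Ch G A m ⟶ Ch G X m).hom =
      (Finsupp.lmapDomain G ℤ (fun σ : Smp A m => (TopCat.toSSet.map i).app (Opposite.op (SimplexCategory.mk m)) σ)).comp (chE G A m).toLinearMap := by
    apply TensorProduct.ext'
    intro p g
    change Smp A m →₀ ℤ at p
    change G at g
    simp only [LinearMap.comp_apply, LinearEquiv.coe_coe, Finsupp.lmapDomain_apply]
    show chE G X m ((((singularChainsFunctor G).map i).f m) (p ⊗ₜ[ℤ] g : Ch G A m)) =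
      Finsupp.mapDomain (fun σ : Smp A m => (TopCat.toSSet.map i).app (Opposite.op (SimplexCategory.mk m)) σ)
        (chE G A m (p ⊗ₜ[ℤ] g))
    erw [chainsMap_tmul]
    show (TensorProduct.finsuppScalarLeft ℤ G (Smp X m))
      ((Finsupp.mapDomain (fun σ : Smp A m => (TopCat.toSSet.map i).app (Opposite.op (SimplexCategory.mk m)) σ) p :
        Smp X m →₀ ℤ) ⊗ₜ[ℤ] g) = _
    rw [TensorProduct.finsuppScalarLeft_apply_tmul]
    show _ = Finsupp.mapDomain _ ((TensorProduct.finsuppScalarLeft ℤ G (Smp A m)) (p ⊗ₜ[ℤ] g))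
    rw [TensorProduct.finsuppScalarLeft_apply_tmul]
    rw [Finsupp.sum_mapDomain_index (by intro a; rw [zero_smul, Finsupp.single_zero])
      (by intro a b₁ b₂; rw [add_smul, Finsupp.single_add])]
    rw [Finsupp.mapDomain_sum]
    simp [Finsupp.mapDomain_single]
  exact DFunLike.congr_fun key c

lemma chainsMap_injective {A X : TopCat.{0}} (i : A ⟶ X)
    (hi : Function.Injective (i : A → X)) (m : ℕ) :
    Function.Injective (((singularChainsFunctor G).map i).f m) := by
  intro a b hab
  have h1 := chE_naturality G i m a
  have h2 := chE_naturality G i m b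
  rw [hab, h2] at h1
  have hinj : Function.Injective (fun σ : Smp A m => (TopCat.toSSet.map i).app (Opposite.op (SimplexCategory.mk m)) σ) := by
    intro σ₁ σ₂ h
    apply ULift.ext
    apply TopCat.hom_ext
    apply ContinuousMap.ext
    intro x
    apply hi
    exact congrArg (fun τ : Smp X m => (asCont τ) x) h
  have := Finsupp.mapDomain_injective hinj h1.symm
  exact (chE G A m).injective this

lemma chains_lift {A X : TopCat.{0}} (i : A ⟶ X) (m : ℕ) (w : Ch G X m)
    (hs : ∀ σ ∈ (chE G X m w).support, ∃ σ' : Smp A m, (TopCat.toSSet.map i).app (Opposite.op (SimplexCategory.mk m)) σ' = σ) :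
    ∃ w' : Ch G A m, (((singularChainsFunctor G).map i).f m) w' = w := by
  set p := chE G X m w with hp
  set q : Smp A m →₀ G :=
    ∑ σ ∈ p.support.attach, Finsupp.single (hs σ.1 σ.2).choose (p σ.1) with hq
  refine ⟨(chE G A m).symm q, (chE G X m).injective ?_⟩
  rw [chE_naturality, LinearEquiv.apply_symm_apply, hq]
  rw [Finsupp.mapDomain_finset_sum]
  have : ∀ σ ∈ p.support.attach,
      Finsupp.mapDomain (fun σ' : Smp A m => (TopCat.toSSet.map i).app (Opposite.op (SimplexCategory.mk m)) σ') (Finsupp.single (hs σ.1 σ.2).choose (p σ.1))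
        = Finsupp.single σ.1 (p σ.1) := by
    intro σ _
    rw [Finsupp.mapDomain_single, (hs σ.1 σ.2).choose_spec]
  rw [Finset.sum_congr rfl this, Finset.sum_attach p.support (fun σ => Finsupp.single σ (p σ))]
  rw [← Finsupp.sum, Finsupp.sum_single]

end ChainsTK

namespace ChainsTK
open ShortComplex'

instance simplexCompact (x : SimplexCategory) : CompactSpace (SimplexCategory.toTop.{0}.obj x) :=
  inferInstanceAs (CompactSpace (ULift (stdSimplex ℝ (Fin (x.len + 1)))))

/-- inclusion morphism in `TopCat` -/
def sInc {X : Type} [TopologicalSpace X] {A B : Set X} (h : A ⊆ B) :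
    TopCat.of A ⟶ TopCat.of B :=
  TopCat.ofHom ⟨Set.inclusion h, continuous_inclusion h⟩

lemma sInc_comp {X : Type} [TopologicalSpace X] {A B C : Set X} (h1 : A ⊆ B) (h2 : B ⊆ C) :
    sInc h1 ≫ sInc h2 = sInc (h1.trans h2) := rfl

variable {G : Type} [AddCommGroup G]

lemma map_vanish_of_factor {X : Type} [TopologicalSpace X] {k : ℕ} {S L V' : Set X}
    (h1 : S ⊆ L) (h2 : L ⊆ V')
    (c : (singularHomologyFunctor G k).obj (TopCat.of S))
    (hc : (singularHomologyFunctor G k).map (sInc h1) c = 0) :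
    (singularHomologyFunctor G k).map (sInc (h1.trans h2)) c = 0 := by
  rw [← sInc_comp h1 h2, Functor.map_comp]
  have : ((singularHomologyFunctor G k).map (sInc h1) ≫
      (singularHomologyFunctor G k).map (sInc h2)) c =
      ((singularHomologyFunctor G k).map (sInc h2))
        (((singularHomologyFunctor G k).map (sInc h1)) c) := rfl
  rw [this, hc, map_zero]

lemma exists_compact_vanish {X : Type} [TopologicalSpace X] {k : ℕ} {S V : Set X}
    (hS : IsCompact S) (hSV : S ⊆ V)
    (c : (singularHomologyFunctor G k).obj (TopCat.of S))
    (hc : (singularHomologyFunctor G k).map (sInc hSV) c = 0) :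
    ∃ L : Set X, IsCompact L ∧ S ⊆ L ∧ L ⊆ V ∧
      ∀ (h1 : S ⊆ L), (singularHomologyFunctor G k).map (sInc h1) c = 0 := by
  classical
  obtain ⟨z, hz, hzc⟩ :=
    hmk_surjective (((singularChainsFunctor G).obj (TopCat.of S)).sc k) c
  have hφV : (singularHomologyFunctor G k).map (sInc hSV) =
      ShortComplex.homologyMap ((HomologicalComplex.shortComplexFunctor _ _ k).map
        ((singularChainsFunctor G).map (sInc hSV))) := rfl
  rw [hφV, ← hzc] at hc
  have hc2 := ((hmk_naturality ((HomologicalComplex.shortComplexFunctor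
      (ModuleCat.{0} ℤ) (ComplexShape.down ℕ) k).map
      ((singularChainsFunctor G).map (sInc hSV))) z hz).symm.trans hc)
  obtain ⟨w, hw⟩ := (hmk_eq_zero_iff _ _ _).1 hc2
  haveI : CompactSpace ((Dl ((ComplexShape.down ℕ).prev k)) : Type) :=
    simplexCompact (SimplexCategory.mk ((ComplexShape.down ℕ).prev k))
  refine ⟨S ∪ ⋃ σ ∈ (chE G (TopCat.of V) ((ComplexShape.down ℕ).prev k) w).support,
      (Subtype.val : V → X) '' Set.range (asCont σ), ?_, Set.subset_union_left, ?_, ?_⟩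
  · refine hS.union ?_
    refine (Finset.finite_toSet _).isCompact_biUnion (fun σ _ => ?_)
    exact ((isCompact_range (asCont σ).continuous).image continuous_subtype_val)
  · rintro x (hx | hx)
    · exact hSV hx
    · simp only [Set.mem_iUnion] at hx
      obtain ⟨σ, hσ, y, hy, rfl⟩ := hx
      exact y.2
  intro h1
  have hLV : (S ∪ ⋃ σ ∈ (chE G (TopCat.of V) ((ComplexShape.down ℕ).prev k) w).support,
      (Subtype.val : V → X) '' Set.range (asCont σ)) ⊆ V := by
    rintro x (hx | hx)
    · exact hSV hx
    · simp only [Set.mem_iUnion] at hx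
      obtain ⟨σ, hσ, y, hy, rfl⟩ := hx
      exact y.2
  have hφL : (singularHomologyFunctor G k).map (sInc h1) =
      ShortComplex.homologyMap ((HomologicalComplex.shortComplexFunctor _ _ k).map
        ((singularChainsFunctor G).map (sInc h1))) := rfl
  rw [hφL, ← hzc]
  refine (hmk_naturality ((HomologicalComplex.shortComplexFunctor
      (ModuleCat.{0} ℤ) (ComplexShape.down ℕ) k).map
      ((singularChainsFunctor G).map (sInc h1))) z hz).trans ?_
  refine (hmk_eq_zero_iff _ _ _).2 ?_
  -- lift w to L
  obtain ⟨w', hw'⟩ := chains_lift G (sInc hLV) ((ComplexShape.down ℕ).prev k) w (by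
    intro σ hσ
    refine ⟨⟨TopCat.ofHom ⟨fun y => ⟨(asCont σ y).1, Or.inr ?_⟩, by
      exact (continuous_subtype_val.comp (asCont σ).continuous).subtype_mk _⟩⟩, ?_⟩
    · simp only [Set.mem_iUnion]
      exact ⟨σ, hσ, asCont σ y, Set.mem_range_self y, rfl⟩
    · apply ULift.ext
      apply TopCat.hom_ext
      apply ContinuousMap.ext
      intro y
      rfl)
  refine ⟨w', ?_⟩
  have hinj := chainsMap_injective G (sInc hLV) (Set.inclusion_injective hLV) k
  apply hinj
  show (((HomologicalComplex.shortComplexFunctor (ModuleCat.{0} ℤ) (ComplexShape.down ℕ) k).map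
      ((singularChainsFunctor G).map (sInc hLV))).τ₂)
      ((((singularChainsFunctor G).obj (TopCat.of _)).sc k).f w') =
    (((HomologicalComplex.shortComplexFunctor (ModuleCat.{0} ℤ) (ComplexShape.down ℕ) k).map
      ((singularChainsFunctor G).map (sInc hLV))).τ₂)
      ((((HomologicalComplex.shortComplexFunctor (ModuleCat.{0} ℤ) (ComplexShape.down ℕ) k).map
        ((singularChainsFunctor G).map (sInc h1))).τ₂) z)
  have ecomp : ((HomologicalComplex.shortComplexFunctor (ModuleCat.{0} ℤ)
        (ComplexShape.down ℕ) k).map ((singularChainsFunctor G).map (sInc h1))) ≫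
      ((HomologicalComplex.shortComplexFunctor (ModuleCat.{0} ℤ)
        (ComplexShape.down ℕ) k).map ((singularChainsFunctor G).map (sInc hLV))) =
      ((HomologicalComplex.shortComplexFunctor (ModuleCat.{0} ℤ)
        (ComplexShape.down ℕ) k).map ((singularChainsFunctor G).map (sInc hSV))) := by
    rw [← Functor.map_comp, ← Functor.map_comp, sInc_comp]
  have e3 : (((HomologicalComplex.shortComplexFunctor (ModuleCat.{0} ℤ)
        (ComplexShape.down ℕ) k).map ((singularChainsFunctor G).map (sInc hLV))).τ₂)
      ((((HomologicalComplex.shortComplexFunctor (ModuleCat.{0} ℤ)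
        (ComplexShape.down ℕ) k).map ((singularChainsFunctor G).map (sInc h1))).τ₂) z) =
      (((HomologicalComplex.shortComplexFunctor (ModuleCat.{0} ℤ)
        (ComplexShape.down ℕ) k).map ((singularChainsFunctor G).map (sInc hSV))).τ₂) z := by
    have h := hcomp (((HomologicalComplex.shortComplexFunctor (ModuleCat.{0} ℤ)
        (ComplexShape.down ℕ) k).map ((singularChainsFunctor G).map (sInc h1))).τ₂)
      (((HomologicalComplex.shortComplexFunctor (ModuleCat.{0} ℤ)
        (ComplexShape.down ℕ) k).map ((singularChainsFunctor G).map (sInc hLV))).τ₂)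
      (x := z) rfl
    rw [← ShortComplex.comp_τ₂, ecomp] at h
    exact h.symm
  have h12 := (((HomologicalComplex.shortComplexFunctor (ModuleCat.{0} ℤ)
      (ComplexShape.down ℕ) k).map ((singularChainsFunctor G).map (sInc hLV)))).comm₁₂
  have e1 := hcomp (((HomologicalComplex.shortComplexFunctor (ModuleCat.{0} ℤ)
      (ComplexShape.down ℕ) k).map ((singularChainsFunctor G).map (sInc hLV))).τ₁)
      ((((singularChainsFunctor G).obj (TopCat.of V)).sc k).f) (x := w') rfl
  rw [h12] at e1
  have e1' := hcomp ((((singularChainsFunctor G).obj (TopCat.of _)).sc k).f)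
      (((HomologicalComplex.shortComplexFunctor (ModuleCat.{0} ℤ)
      (ComplexShape.down ℕ) k).map ((singularChainsFunctor G).map (sInc hLV))).τ₂)
      (x := w') rfl
  have e2 := e1'.symm.trans e1
  rw [e2, e3]
  have e4 : (((HomologicalComplex.shortComplexFunctor (ModuleCat.{0} ℤ)
      (ComplexShape.down ℕ) k).map ((singularChainsFunctor G).map (sInc hLV))).τ₁) w' = w :=
    hw'
  rw [e4]
  exact hw

end ChainsTK

section Geometry
open Metric EMetric

lemma isCompact_of_euclideanSphere {n k : ℕ} {S : Set (Euc n)} (h : IsEuclideanSphere k S) :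
    IsCompact S := by
  obtain ⟨W, x, r, hr, hxW, hrank, rfl⟩ := h
  have hsub : {y : Euc n | y ∈ W ∧ dist y x = r} ⊆ Metric.closedBall x r := fun y hy => by
    simpa [Metric.mem_closedBall] using le_of_eq hy.2
  have hclosed : IsClosed {y : Euc n | y ∈ W ∧ dist y x = r} := by
    have h1 : IsClosed (W : Set (Euc n)) := W.closed_of_finiteDimensional
    have h2 : IsClosed {y : Euc n | dist y x = r} :=
      isClosed_eq (continuous_id.dist continuous_const) continuous_const
    exact h1.inter h2
  exact (isCompact_closedBall x r).of_isClosed_subset hclosed hsub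

lemma exists_far {n : ℕ} {Fj : ℕ → Set (Euc n)} {F : Set (Euc n)}
    (hlim : LocHausdorffTendsto Fj F) {L W : Set (Euc n)} (hL : IsCompact L)
    (hW : IsOpen W) (hLW : L ⊆ W) (hWF : W ∩ F = ∅) :
    ∃ j, ∀ x ∈ L, x ∉ Fj j := by
  obtain ⟨δ, δpos, hδ⟩ := hL.exists_cthickening_subset_open hW hLW
  have hKcomp : IsCompact (Metric.cthickening (δ/2) L) := hL.cthickening
  have h0 : (0:ℝ≥0∞) < ENNReal.ofReal (δ/2) := ENNReal.ofReal_pos.2 (by linarith)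
  have hev := (hlim _ hKcomp).eventually_lt_const h0
  obtain ⟨j, hj⟩ := hev.exists
  refine ⟨j, fun x hxL hxFj => ?_⟩
  have hxK : x ∈ Metric.cthickening (δ/2) L := Metric.self_subset_cthickening L hxL
  have h1 : EMetric.infEdist x F ≤ (⨆ y ∈ Fj j ∩ Metric.cthickening (δ/2) L,
      EMetric.infEdist y F) ⊔ ⨆ y ∈ F ∩ Metric.cthickening (δ/2) L, EMetric.infEdist y (Fj j) :=
    le_trans (le_iSup₂ (f := fun y (_ : y ∈ Fj j ∩ Metric.cthickening (δ/2) L) =>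
      EMetric.infEdist y F) x ⟨hxFj, hxK⟩) le_sup_left
  obtain ⟨y, hyF, hy⟩ := EMetric.infEdist_lt_iff.1 (lt_of_le_of_lt h1 hj)
  have hyW : y ∈ W := hδ (Metric.mem_cthickening_iff.2
    (le_trans (EMetric.infEdist_le_edist_of_mem hxL)
      (le_trans (le_of_lt (by rwa [edist_comm] at hy)) (ENNReal.ofReal_le_ofReal (by linarith)))))
  have : y ∈ W ∩ F := ⟨hyW, hyF⟩
  rw [hWF] at this
  exact this

end Geometry


/-- Proposition 2.8: topological competitors pass to the limit. Let `G` be an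
abelian group, `E` a closed set in an open domain `U ⊆ ℝⁿ`, and `B'` a convex set with
`cl B' ⊆ U`. If `F_j` are `d`-dimensional `G`-topological competitors of `E` in `B'` converging
to a closed set `F` in (local) Hausdorff distance, then for every convex set `B` with
`cl B' ⊆ B ⊆ cl B ⊆ U`, the set `F` is a `G`-topological competitor of dimension `d` of `E`
in `B`. -/
theorem statement2 {n d : ℕ} (G : Type) [AddCommGroup G]
    (U E B' : Set (Euc n)) (hU : IsOpen U) (hE : IsClosed E)
    (hB'conv : Convex ℝ B') (hB'U : closure B' ⊆ U)
    (Fj : ℕ → Set (Euc n)) (hFj : ∀ j, TopCompetitorIn G d U B' E (Fj j))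
    (F : Set (Euc n)) (hF : IsClosed F) (hlim : LocHausdorffTendsto Fj F)
    (B : Set (Euc n)) (hBconv : Convex ℝ B) (hB'B : closure B' ⊆ B) (hBU : closure B ⊆ U) :
    TopCompetitorIn G d U B E F := by
  have hFjB : ∀ j, Fj j \ B' = E \ B' := fun j => (hFj j).2.2.2.1
  have key1 : ∀ x : Euc n, x ∉ B → x ∉ closure B' := fun x hx hc => hx (hB'B hc)
  have hdiff : F \ B = E \ B := by
    apply Set.Subset.antisymm
    · rintro x ⟨hxF, hxB⟩
      refine ⟨?_, hxB⟩
      rw [← hE.closure_eq, EMetric.mem_closure_iff]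
      intro ε εpos
      have hρ : EMetric.infEdist x (closure B') ≠ 0 := by
        intro h0
        exact key1 x hxB (by
          have := EMetric.mem_closure_iff_infEdist_zero.2 h0
          rwa [closure_closure] at this)
      have hηpos : (0:ℝ≥0∞) < min ε (EMetric.infEdist x (closure B')) :=
        lt_min εpos (pos_iff_ne_zero.2 hρ)
      have hev := (hlim {x} isCompact_singleton).eventually_lt_const hηpos
      obtain ⟨j, hj⟩ := hev.exists
      have hb : EMetric.infEdist x (Fj j) ≤ (⨆ y ∈ Fj j ∩ {x}, EMetric.infEdist y F) ⊔
          ⨆ y ∈ F ∩ {x}, EMetric.infEdist y (Fj j) :=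
        le_trans (le_iSup₂ (f := fun y (_ : y ∈ F ∩ {x}) => EMetric.infEdist y (Fj j))
          x ⟨hxF, rfl⟩) le_sup_right
      obtain ⟨y, hyFj, hy⟩ := EMetric.infEdist_lt_iff.1 (lt_of_le_of_lt hb hj)
      have hyB' : y ∉ B' := by
        intro hyB'
        have h1 : EMetric.infEdist x (closure B') ≤ edist x y :=
          EMetric.infEdist_le_edist_of_mem (subset_closure hyB')
        exact absurd (lt_of_le_of_lt h1 (lt_of_lt_of_le hy (min_le_right _ _))) (lt_irrefl _)
      have hyE : y ∈ E := by
        have : y ∈ E \ B' := (hFjB j) ▸ (⟨hyFj, hyB'⟩ : y ∈ Fj j \ B')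
        exact this.1
      exact ⟨y, hyE, lt_of_lt_of_le hy (min_le_left _ _)⟩
    · rintro x ⟨hxE, hxB⟩
      refine ⟨?_, hxB⟩
      have hxB' : x ∉ B' := fun h => key1 x hxB (subset_closure h)
      have hxFj : ∀ j, x ∈ Fj j := by
        intro j
        have : x ∈ Fj j \ B' := (hFjB j).symm ▸ (⟨hxE, hxB'⟩ : x ∈ E \ B')
        exact this.1
      rw [← hF.closure_eq, EMetric.mem_closure_iff_infEdist_zero]
      by_contra h0
      have hpos : (0:ℝ≥0∞) < EMetric.infEdist x F := pos_iff_ne_zero.2 h0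
      obtain ⟨j, hj⟩ := ((hlim {x} isCompact_singleton).eventually_lt_const hpos).exists
      have hb : EMetric.infEdist x F ≤ (⨆ y ∈ Fj j ∩ {x}, EMetric.infEdist y F) ⊔
          ⨆ y ∈ F ∩ {x}, EMetric.infEdist y (Fj j) :=
        le_trans (le_iSup₂ (f := fun y (_ : y ∈ Fj j ∩ {x}) => EMetric.infEdist y F)
          x ⟨hxFj j, rfl⟩) le_sup_left
      exact absurd (lt_of_le_of_lt hb hj) (lt_irrefl _)
  refine ⟨hF, hBconv, hBU, hdiff, ?_⟩
  intro S hSsph hSsub hE' hF' hnon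
  have hScomp : IsCompact S := isCompact_of_euclideanSphere hSsph
  unfold SphereNontrivialIn
  rw [injective_iff_map_eq_zero]
  intro c hc
  obtain ⟨L, hLcomp, hSL, hLUF, hvan⟩ := ChainsTK.exists_compact_vanish hScomp hF' c hc
  have hWF : (U \ F) ∩ F = ∅ := by
    ext y
    simp only [Set.mem_inter_iff, Set.mem_diff, Set.mem_empty_iff_false, iff_false]
    rintro ⟨⟨_, h1⟩, h2⟩
    exact h1 h2
  obtain ⟨j, hj⟩ := exists_far hlim hLcomp (hU.sdiff hF) hLUF hWF
  have hLUFj : L ⊆ U \ Fj j := fun x hx => ⟨(hLUF hx).1, hj x hx⟩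
  have hSFj : S ⊆ U \ Fj j := hSL.trans hLUFj
  have hS_sub' : S ⊆ U \ (B' ∪ E) := by
    intro x hx
    refine ⟨(hSsub hx).1, ?_⟩
    rintro (h | h)
    · exact (hSsub hx).2 (Or.inl (hB'B (subset_closure h)))
    · exact (hSsub hx).2 (Or.inr h)
  have hinj := (hFj j).2.2.2.2 S hSsph hS_sub' hE' hSFj hnon
  have h0 : (singularHomologyFunctor G (n-d-1)).map (ChainsTK.sInc (hSL.trans hLUFj)) c = 0 :=
    ChainsTK.map_vanish_of_factor hSL hLUFj c (hvan hSL)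
  exact hinj (h0.trans (map_zero _).symm)
end
end

section
/- Let ∂E₀ ⊂ ℝⁿ be a compact (d−1)-rectifiable set with finite H^{d−1} measure which is contained in the dyadic (d−1)-skeleton |Δ_{k₀,d−1}| for some k₀ ∈ ℕ. For each k ∈ ℕ let R_k = {Q ∈ Δ_k : there exists Q' ∈ Δ_k with Q' ∩ ∂E₀ ≠ ∅ and Q ∩ Q' ≠ ∅}, and let T_{k,d} be the union of all d-dimensional faces of cubes in R_k. Then lim_{k→∞} H^d(T_{k,d}) = 0. -/
open Set MeasureTheory Metric Filter CategoryTheory MonoidalCategory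
open scoped NNReal ENNReal

noncomputable section

/-- The closed dyadic cube of `Δ_k` (side `2^{-k}`) with lower corner `2^{-k} • c`. -/
def dyadicCube (n k : ℕ) (c : Fin n → ℤ) : Set (Euc n) :=
  {x | ∀ i, x i ∈ Icc ((c i : ℝ) * (2:ℝ)^(-(k:ℤ))) (((c i : ℝ) + 1) * (2:ℝ)^(-(k:ℤ)))}

/-- A face of the dyadic cube `dyadicCube n k c`: the coordinates in `A` run through the
cube's range, the others are frozen at one of the two endpoints (chosen by `ε`). -/
def cubeFace (n k : ℕ) (c : Fin n → ℤ) (A : Finset (Fin n)) (ε : Fin n → Bool) : Set (Euc n) :=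
  {x | ∀ i, (i ∈ A → x i ∈ Icc ((c i : ℝ) * (2:ℝ)^(-(k:ℤ))) (((c i : ℝ) + 1) * (2:ℝ)^(-(k:ℤ)))) ∧
      (i ∉ A → x i = ((c i : ℝ) + if ε i then 1 else 0) * (2:ℝ)^(-(k:ℤ)))}

/-- The `j`-skeleton `|Δ_{k,j}|` of the dyadic grid of side `2^{-k}` in `ℝⁿ`. -/
def dyadicSkeleton (n k j : ℕ) : Set (Euc n) :=
  ⋃ (c : Fin n → ℤ) (A : Finset (Fin n)) (_ : A.card = j) (ε : Fin n → Bool), cubeFace n k c A ε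

/-- The family (of lower corners) of cubes of `Δ_k` touching some cube of `Δ_k` that meets `S`;
this is `Q_k` for `S = E₀` and `R_k` for `S = ∂E₀`. -/
def nbrCubes (n k : ℕ) (S : Set (Euc n)) : Set (Fin n → ℤ) :=
  {c | ∃ c', (dyadicCube n k c' ∩ S).Nonempty ∧ (dyadicCube n k c ∩ dyadicCube n k c').Nonempty}

/-- The union of the `j`-dimensional faces of the cubes of the family `𝒞` (e.g. `S_{k,j}`,
`T_{k,j}`). -/
def facesUnion (n k j : ℕ) (𝒞 : Set (Fin n → ℤ)) : Set (Euc n) :=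
  ⋃ (c ∈ 𝒞) (A : Finset (Fin n)) (_ : A.card = j) (ε : Fin n → Bool), cubeFace n k c A ε

/-- The union of the cubes of the family `𝒞` (e.g. `|Q_k|`, `|R_k|`). -/
def cubesUnion (n k : ℕ) (𝒞 : Set (Fin n → ℤ)) : Set (Euc n) :=
  ⋃ c ∈ 𝒞, dyadicCube n k c

/-- `V(Q)`: the union of the cubes of `Δ_k` that touch some cube of `Δ_k` touching
`Q = dyadicCube n k c`. -/
def VQ (n k : ℕ) (c : Fin n → ℤ) : Set (Euc n) :=
  ⋃ c' ∈ {c' | ∃ c'', (dyadicCube n k c'' ∩ dyadicCube n k c).Nonempty ∧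
      (dyadicCube n k c'' ∩ dyadicCube n k c').Nonempty}, dyadicCube n k c'

/-- The unit cube `[0,1]ⁿ`. -/
def unitCube (n : ℕ) : Set (Euc n) := {x | ∀ i, x i ∈ Icc (0:ℝ) 1}

/-- Hypothesis (4.2): there is a bi-Lipschitz homeomorphism between the convex hull of `E`
and a unit cube `Q₀`, under which `E ∩ ∂U` corresponds to a subset of the dyadic
`(d-1)`-skeleton `|Δ_{k,d-1}|`, for some `k ∈ ℕ`. -/
def BiLipCubeStructure {n : ℕ} (d : ℕ) (U E : Set (Euc n)) : Prop :=
  ∃ (k : ℕ) (ψ : Euc n → Euc n) (L : ℝ≥0), 0 < L ∧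
    LipschitzOnWith L ψ (convexHull ℝ E) ∧
    (∀ x ∈ convexHull ℝ E, ∀ y ∈ convexHull ℝ E, dist x y ≤ L * dist (ψ x) (ψ y)) ∧
    ψ '' convexHull ℝ E = unitCube n ∧
    ψ '' (E ∩ frontier U) ⊆ dyadicSkeleton n k (d - 1)

/-- `U` is a uniformly convex set. -/
def UniformlyConvexSet {n : ℕ} (U : Set (Euc n)) : Prop :=
  ∀ ε > 0, ∃ δ > 0, ∀ x ∈ closure U, ∀ y ∈ closure U, ε ≤ dist x y →
    ball (midpoint ℝ x y) δ ⊆ U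

/-- `S` is `d`-rectifiable: up to an `H^d`-null set, `S` is covered by countably many
Lipschitz images of `ℝ^d`. -/
def IsHRectifiable {n : ℕ} (d : ℕ) (S : Set (Euc n)) : Prop :=
  ∃ f : ℕ → (EuclideanSpace ℝ (Fin d) → Euc n),
    (∀ m, ∃ L : ℝ≥0, LipschitzWith L (f m)) ∧ μH[(d:ℝ)] (S \ ⋃ m, range (f m)) = 0

section Helpers

-- helper: |x i| ≤ ‖x‖
lemma abs_coord_le {n : ℕ} (x : Euc n) (i : Fin n) : |x i| ≤ ‖x‖ := by
  rw [EuclideanSpace.norm_eq]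
  rw [← Real.sqrt_sq_eq_abs]
  apply Real.sqrt_le_sqrt
  calc (x i)^2 ≤ ∑ j, ‖x j‖^2 := by
        refine Finset.single_le_sum (f := fun j => ‖x j‖^2) (fun j _ => by positivity)
          (Finset.mem_univ i) |>.trans_eq' ?_
        simp [sq_abs]
      _ = _ := by rfl

-- Lemma A: measure of a d-dimensional face
lemma face_measure_le {n : ℕ} (d k : ℕ) (c : Fin n → ℤ) (A : Finset (Fin n))
    (ε : Fin n → Bool) (hA : A.card = d) :
    μH[(d:ℝ)] (cubeFace n k c A ε) ≤
      (ENNReal.ofReal (Real.sqrt n * (2:ℝ)^(-(k:ℤ))))^d := by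
  classical
  set ℓ : ℝ := (2:ℝ)^(-(k:ℤ)) with hℓdef
  have hℓ : 0 < ℓ := by positivity
  set e := A.orderIsoOfFin hA with he
  set φ : (Fin d → ℝ) → Euc n := fun y => WithLp.toLp 2
    (fun i => if h : i ∈ A then y (e.symm ⟨i, h⟩)
      else ((c i : ℝ) + if ε i then 1 else 0) * ℓ) with hφ
  set box : Set (Fin d → ℝ) :=
    univ.pi (fun j => Icc ((c (e j : Fin n) : ℝ) * ℓ) (((c (e j : Fin n) : ℝ) + 1) * ℓ)) with hbox
  have hsub : cubeFace n k c A ε ⊆ φ '' box := by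
    intro x hx
    refine ⟨fun j => x (e j), ?_, ?_⟩
    · intro j _
      exact (hx (e j)).1 (e j).2
    · ext i
      by_cases h : i ∈ A
      · simp only [hφ, dif_pos h]
        show x (e (e.symm ⟨i, h⟩)) = x i
        rw [e.apply_symm_apply]
      · simp only [hφ, dif_neg h]
        exact ((hx i).2 h).symm
  have hlip : LipschitzWith (NNReal.sqrt n) φ := by
    apply LipschitzWith.of_dist_le_mul
    intro y y'
    have h1 : dist (φ y) (φ y') = Real.sqrt (∑ i, dist (φ y i) (φ y' i)^2) :=
      EuclideanSpace.dist_eq _ _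
    rw [h1]
    have h2 : ∑ i, dist (φ y i) (φ y' i)^2 ≤ (n : ℝ) * dist y y' ^ 2 := by
      calc ∑ i, dist (φ y i) (φ y' i)^2 ≤ ∑ _i : Fin n, dist y y' ^ 2 := by
            apply Finset.sum_le_sum
            intro i _
            by_cases h : i ∈ A
            · simp only [hφ, dif_pos h]
              exact pow_le_pow_left₀ dist_nonneg (dist_le_pi_dist y y' _) 2
            · rw [show φ y i = φ y' i from by simp [hφ, dif_neg h], dist_self]
              simp [dist_nonneg]
          _ = (n : ℝ) * dist y y' ^ 2 := by simp [Finset.card_univ]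
    calc Real.sqrt (∑ i, dist (φ y i) (φ y' i)^2) ≤ Real.sqrt ((n:ℝ) * dist y y' ^2) :=
          Real.sqrt_le_sqrt h2
      _ = Real.sqrt n * dist y y' := by
          rw [Real.sqrt_mul (by positivity), Real.sqrt_sq dist_nonneg]
      _ = (NNReal.sqrt n : ℝ) * dist y y' := by
          rw [Real.coe_sqrt]; norm_num
  have hmono := measure_mono (μ := μH[(d:ℝ)]) hsub
  have himg := hlip.hausdorffMeasure_image_le (by positivity : (0:ℝ) ≤ d) box
  have hboxvol : μH[(d:ℝ)] box = ENNReal.ofReal ℓ ^ d := by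
    have : (μH[(d:ℝ)] : Measure (Fin d → ℝ)) = volume := by
      rw [← MeasureTheory.hausdorffMeasure_pi_real (ι := Fin d)]
      norm_num
    rw [this, hbox, volume_pi_pi]
    have : ∀ j : Fin d, volume (Icc ((c (e j : Fin n) : ℝ) * ℓ) (((c (e j : Fin n) : ℝ) + 1) * ℓ))
        = ENNReal.ofReal ℓ := by
      intro j
      rw [Real.volume_Icc]
      congr 1
      ring
    simp [this]
  calc μH[(d:ℝ)] (cubeFace n k c A ε) ≤ μH[(d:ℝ)] (φ '' box) := hmono
    _ ≤ (NNReal.sqrt n : ℝ≥0∞) ^ (d:ℝ) * μH[(d:ℝ)] box := himg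
    _ = (NNReal.sqrt n : ℝ≥0∞) ^ d * ENNReal.ofReal ℓ ^ d := by
        rw [hboxvol, ← ENNReal.rpow_natCast ((NNReal.sqrt n : ℝ≥0∞)) d]
    _ = (ENNReal.ofReal (Real.sqrt n * ℓ))^d := by
        rw [ENNReal.ofReal_mul (Real.sqrt_nonneg _), ← mul_pow]
        congr 2
        rw [← ENNReal.ofReal_coe_nnreal, Real.coe_sqrt]
        norm_num


-- touching cubes have close corners
lemma touch_corners {n k : ℕ} {c c' : Fin n → ℤ}
    (h : (dyadicCube n k c ∩ dyadicCube n k c').Nonempty) (i : Fin n) :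
    c' i - 1 ≤ c i ∧ c i ≤ c' i + 1 := by
  obtain ⟨x, hx, hx'⟩ := h
  have hℓ : (0:ℝ) < (2:ℝ)^(-(k:ℤ)) := by positivity
  have h1 := (hx i).1; have h2 := (hx i).2
  have h3 := (hx' i).1; have h4 := (hx' i).2
  constructor
  · have : ((c' i : ℝ) - 1) * (2:ℝ)^(-(k:ℤ)) ≤ (c i : ℝ) * (2:ℝ)^(-(k:ℤ)) := by nlinarith
    have := le_of_mul_le_mul_right (by linarith : ((c' i : ℝ) - 1) * (2:ℝ)^(-(k:ℤ)) ≤ (c i:ℝ) * (2:ℝ)^(-(k:ℤ))) hℓ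
    exact_mod_cast this
  · have : (c i : ℝ) * (2:ℝ)^(-(k:ℤ)) ≤ ((c' i : ℝ) + 1) * (2:ℝ)^(-(k:ℤ)) := by nlinarith
    have := le_of_mul_le_mul_right this hℓ
    exact_mod_cast this

-- corners of cubes near a coarse face
lemma corner_mem {n k₀ k : ℕ} (hk : k₀ ≤ k) {c₀ : Fin n → ℤ} {A₀ : Finset (Fin n)}
    {ε₀ : Fin n → Bool} {x : Euc n} (hx : x ∈ cubeFace n k₀ c₀ A₀ ε₀) {c' c : Fin n → ℤ}
    (hx' : x ∈ dyadicCube n k c')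
    (htouch : (dyadicCube n k c ∩ dyadicCube n k c').Nonempty) (i : Fin n) :
    c i ∈ Finset.Icc
      ((if i ∈ A₀ then c₀ i * 2^(k-k₀) else (c₀ i + if ε₀ i then 1 else 0) * 2^(k-k₀)) - 2)
      ((if i ∈ A₀ then (c₀ i + 1) * 2^(k-k₀) else (c₀ i + if ε₀ i then 1 else 0) * 2^(k-k₀)) + 1)
    := by
  have hℓ : (0:ℝ) < (2:ℝ)^(-(k:ℤ)) := by positivity
  set ℓ : ℝ := (2:ℝ)^(-(k:ℤ))
  have hM : (2:ℝ)^(-(k₀:ℤ)) = ((2^(k-k₀) : ℤ) : ℝ) * ℓ := by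
    push_cast
    rw [← zpow_natCast (2:ℝ) (k - k₀), ← zpow_add₀ (two_ne_zero)]
    congr 1
    omega
  have htc := touch_corners htouch i
  have hx1 := (hx' i).1; have hx2 := (hx' i).2
  -- bounds on c' i
  have key : ∀ a : ℤ, ((a:ℝ) * (2:ℝ)^(-(k₀:ℤ)) ≤ x i → a * 2^(k-k₀) ≤ c' i + 1) ∧
      (x i ≤ (a:ℝ) * (2:ℝ)^(-(k₀:ℤ)) → c' i ≤ a * 2^(k-k₀)) := by
    intro a
    constructor
    · intro h
      rw [hM, ← mul_assoc] at h
      have : ((a * 2^(k-k₀) : ℤ) : ℝ) * ℓ ≤ ((c' i + 1 : ℤ) : ℝ) * ℓ := by push_cast; push_cast at h; nlinarith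
      exact_mod_cast le_of_mul_le_mul_right this hℓ
    · intro h
      rw [hM, ← mul_assoc] at h
      have : ((c' i : ℤ) : ℝ) * ℓ ≤ ((a * 2^(k-k₀) : ℤ) : ℝ) * ℓ := by push_cast; push_cast at h; nlinarith
      exact_mod_cast le_of_mul_le_mul_right this hℓ
  rw [Finset.mem_Icc]
  by_cases hiA : i ∈ A₀
  · have hy := (hx i).1 hiA
    have l1 := (key (c₀ i)).1 hy.1
    have l2 := (key (c₀ i + 1)).2 (by push_cast; exact hy.2)
    simp only [if_pos hiA]
    omega
  · have hy := (hx i).2 hiA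
    have l1 := (key (c₀ i + if ε₀ i then 1 else 0)).1 (by push_cast; exact ge_of_eq hy)
    have l2 := (key (c₀ i + if ε₀ i then 1 else 0)).2 (by push_cast; exact le_of_eq hy)
    simp only [if_neg hiA]
    omega

-- bound on coarse corners from a norm bound
lemma coarse_corner_bound {n k₀ : ℕ} {c₀ : Fin n → ℤ} {A₀ : Finset (Fin n)}
    {ε₀ : Fin n → Bool} {x : Euc n} (hx : x ∈ cubeFace n k₀ c₀ A₀ ε₀) {R : ℝ}
    (hR : ∀ i, |x i| ≤ R) (i : Fin n) :
    c₀ i ∈ Finset.Icc (-(⌈R * 2^k₀⌉ + 1)) (⌈R * 2^k₀⌉ + 1) := by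
  have ht : (0:ℝ) < (2:ℝ)^(k₀:ℕ) := by positivity
  have hℓt : (2:ℝ)^(-(k₀:ℤ)) * (2:ℝ)^(k₀:ℕ) = 1 := by
    rw [← zpow_natCast (2:ℝ) k₀, ← zpow_add₀ (two_ne_zero)]
    simp
  have hxi := hR i
  rw [abs_le] at hxi
  have hceil : R * 2^(k₀:ℕ) ≤ (⌈R * 2^k₀⌉ : ℝ) := Int.le_ceil _
  have key : ∀ a : ℤ, ((a:ℝ) * (2:ℝ)^(-(k₀:ℤ)) ≤ x i → a ≤ ⌈R * 2^k₀⌉) ∧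
      (x i ≤ (a:ℝ) * (2:ℝ)^(-(k₀:ℤ)) → -(⌈R * 2^k₀⌉) ≤ a) := by
    intro a
    constructor
    · intro h
      have h3 : (a:ℝ) * (2:ℝ)^(-(k₀:ℤ)) ≤ R := le_trans h hxi.2
      have e1 : (a:ℝ) * 2^(-(k₀:ℤ)) * 2^(k₀:ℕ) = a := by rw [mul_assoc, hℓt, mul_one]
      have : (a:ℝ) ≤ R * 2^(k₀:ℕ) := by
        linarith [mul_le_mul_of_nonneg_right h3 ht.le, e1]
      have : (a:ℝ) ≤ (⌈R * 2^k₀⌉ : ℝ) := le_trans this hceil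
      exact_mod_cast this
    · intro h
      have h2 : -R ≤ (a:ℝ) * (2:ℝ)^(-(k₀:ℤ)) := le_trans hxi.1 h
      have e1 : (a:ℝ) * 2^(-(k₀:ℤ)) * 2^(k₀:ℕ) = a := by rw [mul_assoc, hℓt, mul_one]
      have : -(R * 2^(k₀:ℕ)) ≤ (a:ℝ) := by
        linarith [mul_le_mul_of_nonneg_right h2 ht.le, e1]
      have : (-(⌈R * 2^k₀⌉:ℤ) : ℝ) ≤ (a:ℝ) := by push_cast; linarith
      exact_mod_cast this
  rw [Finset.mem_Icc]
  by_cases hiA : i ∈ A₀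
  · have hy := (hx i).1 hiA
    have l1 := (key (c₀ i)).1 hy.1
    have l2 := (key (c₀ i + 1)).2 (by push_cast; exact hy.2)
    omega
  · have hy := (hx i).2 hiA
    have l1 := (key (c₀ i + if ε₀ i then 1 else 0)).1 (by push_cast; exact ge_of_eq hy)
    have l2 := (key (c₀ i + if ε₀ i then 1 else 0)).2 (by push_cast; exact le_of_eq hy)
    omega


end Helpers

/-- Proposition 4.4, 1°. Let `∂E₀ ⊆ ℝⁿ` be a compact `(d-1)`-rectifiable
set with finite `H^{d-1}` measure, contained in the dyadic `(d-1)`-skeleton `|Δ_{k₀,d-1}|`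
for some `k₀`. With `R_k` the family of cubes of `Δ_k` touching some cube of `Δ_k` meeting
`∂E₀`, and `T_{k,d}` the union of the `d`-faces of the cubes of `R_k`, one has
`H^d(T_{k,d}) → 0` as `k → ∞`. -/
theorem statement9 {n d : ℕ} (hd : 0 < d) (bdry : Set (Euc n)) (k₀ : ℕ)
    (hcomp : IsCompact bdry) (hrect : IsHRectifiable (d - 1) bdry)
    (hfin : μH[((d - 1 : ℕ) : ℝ)] bdry < ⊤)
    (hskel : bdry ⊆ dyadicSkeleton n k₀ (d - 1)) :
    Tendsto (fun k => μH[(d:ℝ)] (facesUnion n k d (nbrCubes n k bdry))) atTop (nhds 0) := by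
  classical
  obtain ⟨R', hR'⟩ := hcomp.isBounded.subset_closedBall 0
  set R : ℝ := max R' 0 with hRdef
  have hRb : ∀ x ∈ bdry, ∀ i, |x i| ≤ R := by
    intro x hx i
    have h1 : ‖x‖ ≤ R' := by
      have := hR' hx; rwa [mem_closedBall_zero_iff] at this
    exact (abs_coord_le x i).trans (h1.trans (le_max_left _ _))
  set N : ℤ := ⌈R * 2^k₀⌉ + 1 with hN
  set T : Finset ((Fin n → ℤ) × (Finset (Fin n)) × (Fin n → Bool)) :=
    (Fintype.piFinset fun _ => Finset.Icc (-N) N) ×ˢ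
      ((Finset.univ.filter fun A : Finset (Fin n) => A.card = d - 1) ×ˢ Finset.univ) with hT
  set G : ℕ → ((Fin n → ℤ) × (Finset (Fin n)) × (Fin n → Bool)) → Finset (Fin n → ℤ) :=
    fun k t => Fintype.piFinset fun i => Finset.Icc
      ((if i ∈ t.2.1 then t.1 i * 2^(k-k₀) else (t.1 i + if t.2.2 i then 1 else 0) * 2^(k-k₀)) - 2)
      ((if i ∈ t.2.1 then (t.1 i + 1) * 2^(k-k₀) else (t.1 i + if t.2.2 i then 1 else 0) * 2^(k-k₀)) + 1)
    with hG
  set filt : Finset (Finset (Fin n)) := Finset.univ.filter fun A => A.card = d with hfilt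
  set CA : ℕ := filt.card with hCA
  set CE : ℕ := (Finset.univ : Finset (Fin n → Bool)).card with hCE
  set a : ℝ≥0∞ := ENNReal.ofReal (Real.sqrt n) with ha
  set D : ℝ≥0∞ := (T.card : ℝ≥0∞) * (5^(d-1) * 4^n) * ((CA * CE : ℕ) * a^d) with hD
  have hDne : D ≠ ⊤ := by
    rw [hD]
    refine ENNReal.mul_ne_top (ENNReal.mul_ne_top (ENNReal.natCast_ne_top _)
      (ENNReal.mul_ne_top (ENNReal.pow_ne_top (by norm_num)) (ENNReal.pow_ne_top (by norm_num)))) ?_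
    exact ENNReal.mul_ne_top (ENNReal.natCast_ne_top _) (ENNReal.pow_ne_top ENNReal.ofReal_ne_top)
  have hstep : ∀ k, k₀ ≤ k →
      μH[(d:ℝ)] (facesUnion n k d (nbrCubes n k bdry)) ≤ D * (2⁻¹:ℝ≥0∞)^k := by
    intro k hk
    set ℓ : ℝ := (2:ℝ)^(-(k:ℤ)) with hℓ
    set bface : ℝ≥0∞ := (ENNReal.ofReal (Real.sqrt n * ℓ))^d with hbface
    have hcover : facesUnion n k d (nbrCubes n k bdry) ⊆
        ⋃ t ∈ T, ⋃ c ∈ G k t, ⋃ A ∈ filt,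
          ⋃ ε ∈ (Finset.univ : Finset (Fin n → Bool)), cubeFace n k c A ε := by
      intro x hx
      simp only [facesUnion, mem_iUnion] at hx
      obtain ⟨c, hc, A, hA, ε, hx⟩ := hx
      obtain ⟨c', ⟨x₀, hx₀c', hx₀b⟩, htouch⟩ := hc
      have hx₀skel := hskel hx₀b
      simp only [dyadicSkeleton, mem_iUnion] at hx₀skel
      obtain ⟨c₀, A₀, hA₀, ε₀, hx₀f⟩ := hx₀skel
      have htT : (c₀, A₀, ε₀) ∈ T := by
        rw [hT]
        simp only [Finset.mem_product, Fintype.mem_piFinset, Finset.mem_filter,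
          Finset.mem_univ, true_and, and_true]
        exact ⟨fun i => coarse_corner_bound hx₀f (hRb x₀ hx₀b) i, hA₀⟩
      have hcG : c ∈ G k (c₀, A₀, ε₀) := by
        rw [hG, Fintype.mem_piFinset]
        exact fun i => corner_mem hk hx₀f hx₀c' htouch i
      simp only [mem_iUnion]
      exact ⟨(c₀, A₀, ε₀), htT, c, hcG, A,
        by rw [hfilt]; simp [hA], ε, Finset.mem_univ ε, hx⟩
    have hface : ∀ (c : Fin n → ℤ) (A : Finset (Fin n)) (ε : Fin n → Bool), A ∈ filt →
        μH[(d:ℝ)] (cubeFace n k c A ε) ≤ bface := by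
      intro c A ε hA
      rw [hfilt, Finset.mem_filter] at hA
      exact face_measure_le d k c A ε hA.2
    have h1 : μH[(d:ℝ)] (facesUnion n k d (nbrCubes n k bdry)) ≤
        ∑ t ∈ T, ((G k t).card : ℝ≥0∞) * (((CA * CE : ℕ) : ℝ≥0∞) * bface) := by
      refine (measure_mono hcover).trans ?_
      refine (measure_biUnion_finset_le _ _).trans (Finset.sum_le_sum fun t _ => ?_)
      refine (measure_biUnion_finset_le _ _).trans ?_
      have hinner : ∀ c ∈ G k t,
          μH[(d:ℝ)] (⋃ A ∈ filt, ⋃ ε ∈ (Finset.univ : Finset (Fin n → Bool)),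
            cubeFace n k c A ε) ≤ ((CA * CE : ℕ) : ℝ≥0∞) * bface := by
        intro c _
        refine (measure_biUnion_finset_le _ _).trans ?_
        calc ∑ A ∈ filt, μH[(d:ℝ)]
              (⋃ ε ∈ (Finset.univ : Finset (Fin n → Bool)), cubeFace n k c A ε)
            ≤ ∑ A ∈ filt, ∑ ε ∈ (Finset.univ : Finset (Fin n → Bool)),
                μH[(d:ℝ)] (cubeFace n k c A ε) :=
              Finset.sum_le_sum fun A _ => measure_biUnion_finset_le _ _
          _ ≤ ∑ A ∈ filt, ∑ _ε ∈ (Finset.univ : Finset (Fin n → Bool)), bface :=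
              Finset.sum_le_sum fun A hA => Finset.sum_le_sum fun ε _ => hface c A ε hA
          _ = ((CA * CE : ℕ) : ℝ≥0∞) * bface := by
              simp only [Finset.sum_const, nsmul_eq_mul, ← hCE, ← hCA]
              push_cast
              ring
      refine (Finset.sum_le_sum hinner).trans ?_
      rw [Finset.sum_const, nsmul_eq_mul]
    have hGcard : ∀ t ∈ T, ((G k t).card : ℝ≥0∞) ≤
        (((2^(k-k₀) + 4 : ℕ))^(d-1) * 4^n : ℕ) := by
      intro t ht
      have hA₀ : t.2.1.card = d - 1 := by
        rw [hT] at ht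
        simp only [Finset.mem_product, Finset.mem_filter] at ht
        exact ht.2.1.2
      have hpow : ((2:ℤ)^(k-k₀)) = ((2^(k-k₀):ℕ):ℤ) := by push_cast; ring
      have heach : ∀ i, (Finset.Icc
          ((if i ∈ t.2.1 then t.1 i * 2^(k-k₀) else (t.1 i + if t.2.2 i then 1 else 0) * 2^(k-k₀)) - 2)
          ((if i ∈ t.2.1 then (t.1 i + 1) * 2^(k-k₀) else (t.1 i + if t.2.2 i then 1 else 0) * 2^(k-k₀)) + 1)).card
          = if i ∈ t.2.1 then 2^(k-k₀)+4 else 4 := by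
        intro i
        by_cases h : i ∈ t.2.1
        · simp only [if_pos h]
          rw [Int.card_Icc]
          rw [show ((t.1 i + 1) * 2^(k-k₀) + 1 + 1 - (t.1 i * 2^(k-k₀) - 2) : ℤ)
            = ((2^(k-k₀) + 4 : ℕ) : ℤ) from by push_cast; ring]
          exact Int.toNat_natCast _
        · simp only [if_neg h]
          rw [Int.card_Icc]
          rw [show ((t.1 i + if t.2.2 i then 1 else 0) * 2^(k-k₀) + 1 + 1
              - ((t.1 i + if t.2.2 i then 1 else 0) * 2^(k-k₀) - 2) : ℤ) = ((4:ℕ):ℤ) from by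
            push_cast; ring]
          exact Int.toNat_natCast _
      have hcard : (G k t).card = (2^(k-k₀)+4)^(d-1) *
          4^((Finset.univ.filter fun i => ¬ i ∈ t.2.1).card) := by
        rw [hG]
        rw [Fintype.card_piFinset]
        rw [Finset.prod_congr rfl (fun i _ => heach i)]
        rw [Finset.prod_ite, Finset.prod_const, Finset.prod_const]
        congr 2
        rw [show (Finset.univ.filter fun i => i ∈ t.2.1) = t.2.1 from by ext i; simp]
        exact hA₀
      rw [hcard]
      refine Nat.cast_le.2 ?_
      refine Nat.mul_le_mul_left _ ?_
      refine Nat.pow_le_pow_right (by norm_num) ?_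
      exact (Finset.card_filter_le _ _).trans (by simp)
    have hofℓ : ENNReal.ofReal ℓ = (2⁻¹:ℝ≥0∞)^k := by
      rw [hℓ, show (2:ℝ)^(-(k:ℤ)) = ((2:ℝ)⁻¹)^k from by
        rw [zpow_neg, zpow_natCast, ← inv_pow]]
      rw [ENNReal.ofReal_pow (by norm_num)]
      congr 1
      rw [ENNReal.ofReal_inv_of_pos (by norm_num)]
      norm_num
    have hbf : bface = a^d * ((2⁻¹:ℝ≥0∞)^k)^d := by
      rw [hbface, ENNReal.ofReal_mul (Real.sqrt_nonneg _), hofℓ, mul_pow, ha]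
    have hMn : (2^(k-k₀) + 4 : ℕ) ≤ 5 * 2^k := by
      have h1 : (2:ℕ)^(k-k₀) ≤ 2^k := Nat.pow_le_pow_right (by norm_num) (Nat.sub_le _ _)
      have h2 : (1:ℕ) ≤ 2^k := Nat.one_le_two_pow
      omega
    have hM : (((2^(k-k₀)+4 : ℕ)) : ℝ≥0∞) ≤ 5 * 2^k := by
      calc (((2^(k-k₀)+4:ℕ)) : ℝ≥0∞) ≤ ((5*2^k : ℕ) : ℝ≥0∞) := Nat.cast_le.2 hMn
        _ = 5 * 2^k := by push_cast; ring
    have hcancel : ((2:ℝ≥0∞)^k)^(d-1) * ((2⁻¹:ℝ≥0∞)^k)^(d-1) = 1 := by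
      rw [← mul_pow, ← mul_pow, ENNReal.mul_inv_cancel two_ne_zero ENNReal.ofNat_ne_top,
        one_pow, one_pow]
    have hsplit : ((2⁻¹:ℝ≥0∞)^k)^d = ((2⁻¹:ℝ≥0∞)^k)^(d-1) * (2⁻¹:ℝ≥0∞)^k := by
      conv_lhs => rw [← Nat.sub_add_cancel hd]
      rw [pow_succ]
    calc μH[(d:ℝ)] (facesUnion n k d (nbrCubes n k bdry))
        ≤ ∑ t ∈ T, ((G k t).card : ℝ≥0∞) * (((CA * CE : ℕ) : ℝ≥0∞) * bface) := h1
      _ ≤ ∑ _t ∈ T, ((((2^(k-k₀) + 4 : ℕ))^(d-1) * 4^n : ℕ) : ℝ≥0∞) *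
            (((CA * CE : ℕ) : ℝ≥0∞) * bface) :=
          Finset.sum_le_sum fun t ht => mul_le_mul_left (hGcard t ht) _
      _ = (T.card : ℝ≥0∞) * (((((2^(k-k₀) + 4 : ℕ)):ℝ≥0∞))^(d-1) * 4^n) *
            (((CA * CE : ℕ) : ℝ≥0∞) * bface) := by
          rw [Finset.sum_const, nsmul_eq_mul]
          push_cast
          ring
      _ ≤ (T.card : ℝ≥0∞) * ((5 * 2^k)^(d-1) * 4^n) *
            (((CA * CE : ℕ) : ℝ≥0∞) * (a^d * ((2⁻¹:ℝ≥0∞)^k)^d)) := by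
          rw [hbf]
          gcongr
      _ = D * (2⁻¹:ℝ≥0∞)^k * (((2:ℝ≥0∞)^k)^(d-1) * ((2⁻¹:ℝ≥0∞)^k)^(d-1)) := by
          rw [hsplit, hD, mul_pow]
          ring
      _ = D * (2⁻¹:ℝ≥0∞)^k := by rw [hcancel, mul_one]
  have h0 : Tendsto (fun k => D * (2⁻¹:ℝ≥0∞)^k) atTop (nhds 0) := by
    have hp := ENNReal.tendsto_pow_atTop_nhds_zero_of_lt_one
      (by norm_num : (2⁻¹:ℝ≥0∞) < 1)
    simpa using ENNReal.Tendsto.const_mul hp (Or.inr hDne)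
  refine tendsto_of_tendsto_of_tendsto_of_le_of_le' tendsto_const_nhds h0
    (Eventually.of_forall fun k => zero_le) ?_
  exact eventually_atTop.2 ⟨k₀, hstep⟩
end
end
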